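/- Let B, μ, β, d, α > 0 and let G : [0,∞) → [0,∞) satisfy Assumption 2.1 with G strictly increasing, concave, G(0)=0, lim_{I→∞} G(I) = C < ∞. Let T₁, T₂, T₃ ≥ 0 be nonnegative random variables with finite moment generating expectations E(e^{-μTᵢ}) ∈ (0,1]. Define H(I) = B - (1/E(e^{-μ(T₁+T₂)})) · I · [ (μ+d+α)μ/(β G(I)) + (μ+d)E(e^{-μT₁}) + α E(e^{-μT₁})(1 - E(e^{-μT₂})E(e^{-μT₃})) ] for I > 0. If H(0⁺) := lim_{I→0⁺} H(I) > 0, then H has a unique positive root I* > 0. -/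
import Mathlib

theorem endemic_equilibrium_unique_root
    (B μ β d α C : ℝ) (hB : 0 < B) (hμ : 0 < μ) (hβ : 0 < β)
    (hd : 0 < d) (hα : 0 < α)
    (G : ℝ → ℝ)
    (hmono : StrictMonoOn G (Set.Ici (0:ℝ)))
    (hconc : StrictConcaveOn ℝ (Set.Ici (0:ℝ)) G)
    (hG0 : G 0 = 0)
    (hGpos : ∀ I > (0:ℝ), 0 < G I)
    (hGlim : Filter.Tendsto G Filter.atTop (nhds C))
    (hC : 0 ≤ C)
    -- expectations E(e^{-μT₁}), E(e^{-μT₂}), E(e^{-μT₃}), E(e^{-μ(T₁+T₂)})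
    (E₁ E₂ E₃ E₁₂ : ℝ)
    (hE₁ : 0 < E₁ ∧ E₁ ≤ 1) (hE₂ : 0 < E₂ ∧ E₂ ≤ 1)
    (hE₃ : 0 < E₃ ∧ E₃ ≤ 1) (hE₁₂ : 0 < E₁₂ ∧ E₁₂ ≤ 1)
    (H : ℝ → ℝ)
    (hH : ∀ I > (0:ℝ),
      H I = B - (1 / E₁₂) * I *
        ((μ + d + α) * μ / (β * G I) + (μ + d) * E₁ +
          α * E₁ * (1 - E₂ * E₃)))
    (L : ℝ)
    (hHlim : Filter.Tendsto H (nhdsWithin 0 (Set.Ioi 0)) (nhds L))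
    (hL : 0 < L) :
    ∃! Istar : ℝ, 0 < Istar ∧ H Istar = 0 := by
  obtain ⟨hE₁p, hE₁le⟩ := hE₁
  obtain ⟨hE₂p, hE₂le⟩ := hE₂
  obtain ⟨hE₃p, hE₃le⟩ := hE₃
  obtain ⟨hE₁₂p, hE₁₂le⟩ := hE₁₂
  obtain ⟨k2, hk2⟩ : ∃ k2 : ℝ, k2 = (μ + d) * E₁ + α * E₁ * (1 - E₂ * E₃) := ⟨_, rfl⟩
  have hk2pos : 0 < k2 := by
    have h23 : E₂ * E₃ ≤ 1 := by nlinarith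
    have h1' : 0 ≤ 1 - E₂ * E₃ := by linarith
    have h2' : 0 ≤ α * E₁ * (1 - E₂ * E₃) := by positivity
    nlinarith [mul_pos (by linarith : (0:ℝ) < μ + d) hE₁p]
  -- key: G x / x decreasing, i.e. x * G y ≤ y * G x for 0 < x < y
  have hkey : ∀ x y : ℝ, 0 < x → x < y → x * G y ≤ y * G x := by
    intro x y hx hxy
    have hy : 0 < y := hx.trans hxy
    have ht0 : (0:ℝ) < x / y := div_pos hx hy
    have ht1 : x / y < 1 := (div_lt_one hy).mpr hxy
    have := hconc.concaveOn.2 (Set.mem_Ici.mpr (le_refl 0))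
      (Set.mem_Ici.mpr hy.le) (by linarith : (0:ℝ) ≤ 1 - x / y)
      (le_of_lt ht0) (by ring)
    simp only [smul_eq_mul, mul_zero, zero_add, hG0, mul_zero] at this
    -- this : (1 - x/y) * G 0 + (x/y) * G y ≤ G ((1-x/y) • 0 + (x/y) • y) kind of
    have hxy' : x / y * y = x := div_mul_cancel₀ x hy.ne'
    rw [hxy'] at this
    have : x / y * G y ≤ G x := by linarith
    calc x * G y = (x / y * G y) * y := by field_simp
    _ ≤ G x * y := by
        apply mul_le_mul_of_nonneg_right this hy.le
    _ = y * G x := by ring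
  -- H is strictly decreasing on (0, ∞)
  have hanti : ∀ x y : ℝ, 0 < x → x < y → H y < H x := by
    intro x y hx hxy
    have hy : 0 < y := hx.trans hxy
    have hGx := hGpos x hx
    have hGy := hGpos y hy
    rw [hH x hx, hH y hy]
    have h1 : x * ((μ + d + α) * μ / (β * G x)) ≤ y * ((μ + d + α) * μ / (β * G y)) := by
      rw [← mul_div_assoc, ← mul_div_assoc, div_le_div_iff₀ (by positivity) (by positivity)]
      have hkxy := hkey x y hx hxy
      nlinarith [mul_le_mul_of_nonneg_left hkxy (by positivity : (0:ℝ) ≤ (μ + d + α) * μ * β)]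
    have h2 : x * k2 < y * k2 := by nlinarith
    have hE : 0 < 1 / E₁₂ := by positivity
    have : 1 / E₁₂ * (x * ((μ + d + α) * μ / (β * G x)) + x * k2)
        < 1 / E₁₂ * (y * ((μ + d + α) * μ / (β * G y)) + y * k2) := by
      apply mul_lt_mul_of_pos_left (by linarith) hE
    calc B - 1 / E₁₂ * y * ((μ + d + α) * μ / (β * G y) + (μ + d) * E₁ + α * E₁ * (1 - E₂ * E₃))
        = B - 1 / E₁₂ * (y * ((μ + d + α) * μ / (β * G y)) + y * k2) := by rw [hk2]; ring
      _ < B - 1 / E₁₂ * (x * ((μ + d + α) * μ / (β * G x)) + x * k2) := by linarith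
      _ = B - 1 / E₁₂ * x * ((μ + d + α) * μ / (β * G x) + (μ + d) * E₁ + α * E₁ * (1 - E₂ * E₃)) := by
          rw [hk2]; ring
  -- H I ≤ B - k2 * I for I > 0
  have hub : ∀ I : ℝ, 0 < I → H I ≤ B - k2 * I := by
    intro I hI
    have hGI := hGpos I hI
    rw [hH I hI]
    have h1 : 0 ≤ I * ((μ + d + α) * μ / (β * G I)) := by positivity
    have hE : 1 ≤ 1 / E₁₂ := by
      rw [le_div_iff₀ hE₁₂p]; linarith
    have h2 : k2 * I ≤ 1 / E₁₂ * I * ((μ + d + α) * μ / (β * G I) + (μ + d) * E₁ + α * E₁ * (1 - E₂ * E₃)) := by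
      have : 1 / E₁₂ * I * ((μ + d + α) * μ / (β * G I) + k2)
          = 1 / E₁₂ * (I * ((μ + d + α) * μ / (β * G I))) + 1 / E₁₂ * (I * k2) := by ring
      have hk2I : I * k2 ≤ 1 / E₁₂ * (I * k2) := by
        nlinarith [mul_pos hI hk2pos]
      have hnn : 0 ≤ 1 / E₁₂ * (I * ((μ + d + α) * μ / (β * G I))) := by positivity
      calc k2 * I = I * k2 := by ring
        _ ≤ 1 / E₁₂ * (I * k2) := hk2I
        _ ≤ 1 / E₁₂ * (I * ((μ + d + α) * μ / (β * G I))) + 1 / E₁₂ * (I * k2) := by linarith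
        _ = 1 / E₁₂ * I * ((μ + d + α) * μ / (β * G I) + (μ + d) * E₁ + α * E₁ * (1 - E₂ * E₃)) := by
            rw [hk2]; ring
    linarith
  -- pick I₁ with H I₁ < 0
  set I₁ : ℝ := (B + 1) / k2 with hI₁def
  have hI₁pos : 0 < I₁ := by positivity
  have hHI₁ : H I₁ < 0 := by
    have := hub I₁ hI₁pos
    have : k2 * I₁ = B + 1 := by
      rw [hI₁def]; field_simp
    linarith [hub I₁ hI₁pos]
  -- pick a small with H a > 0 and 0 < a < I₁
  have hev1 : ∀ᶠ I in nhdsWithin 0 (Set.Ioi 0), 0 < H I :=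
    hHlim.eventually (eventually_gt_nhds hL)
  have hev2 : ∀ᶠ I in nhdsWithin 0 (Set.Ioi 0), I < I₁ :=
    Filter.Eventually.filter_mono nhdsWithin_le_nhds (eventually_lt_nhds hI₁pos)
  have hev3 : ∀ᶠ I in nhdsWithin 0 (Set.Ioi 0), I ∈ Set.Ioi (0:ℝ) :=
    eventually_mem_nhdsWithin
  obtain ⟨a, haH, haI₁, ha0'⟩ := (hev1.and (hev2.and hev3)).exists
  have ha0 : 0 < a := ha0'
  -- continuity of H on [a, I₁]
  have hGcont : ContinuousOn G (Set.Ioi (0:ℝ)) := by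
    have : ConcaveOn ℝ (Set.Ioi (0:ℝ)) G :=
      hconc.concaveOn.subset Set.Ioi_subset_Ici_self (convex_Ioi 0)
    exact this.continuousOn isOpen_Ioi
  have hHcont : ContinuousOn H (Set.Icc a I₁) := by
    have hsub : Set.Icc a I₁ ⊆ Set.Ioi (0:ℝ) := fun z hz => lt_of_lt_of_le ha0 hz.1
    have hGc : ContinuousOn G (Set.Icc a I₁) := hGcont.mono hsub
    have hne : ∀ z ∈ Set.Icc a I₁, β * G z ≠ 0 := by
      intro z hz
      have := hGpos z (hsub hz)
      positivity
    have hfc : ContinuousOn (fun I => B - (1 / E₁₂) * I *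
        ((μ + d + α) * μ / (β * G I) + (μ + d) * E₁ + α * E₁ * (1 - E₂ * E₃)))
        (Set.Icc a I₁) := by
      apply continuousOn_const.sub
      apply ContinuousOn.mul
      · exact continuousOn_const.mul continuousOn_id
      · apply ContinuousOn.add
        apply ContinuousOn.add
        · exact ContinuousOn.div continuousOn_const (continuousOn_const.mul hGc) hne
        · exact continuousOn_const
        · exact continuousOn_const
    exact hfc.congr (fun z hz => hH z (hsub hz))
  -- IVT
  have hale : a ≤ I₁ := le_of_lt haI₁
  have h0mem : (0:ℝ) ∈ Set.Icc (H I₁) (H a) := ⟨le_of_lt hHI₁, le_of_lt haH⟩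
  obtain ⟨c, hcmem, hc0⟩ := intermediate_value_Icc' hale hHcont h0mem
  have hcpos : 0 < c := lt_of_lt_of_le ha0 hcmem.1
  refine ⟨c, ⟨hcpos, hc0⟩, ?_⟩
  rintro y ⟨hy, hyH⟩
  by_contra hne
  rcases lt_or_gt_of_ne hne with h | h
  · have := hanti y c hy h; rw [hc0, hyH] at this; exact lt_irrefl 0 this
  · have := hanti c y hcpos h; rw [hc0, hyH] at this; exact lt_irrefl 0 this
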